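/- Let 0 < q < 1 and let d̄_k > 0 (k ≥ 1) satisfy (log d̄_k)/k → log q as k → ∞. Then Σ_{k≥1} d̄_k < ∞, and with k₀(n) = min{ k ≥ 0 : n·Σ_{ℓ>k} d̄_ℓ ≤ 1 } and k₁(n) = max{ k ≥ 0 : n·Σ_{ℓ>k} d̄_ℓ ≥ log n } (the latter well defined for all sufficiently large n), one has k₀(n)/log n → 1/log(1/q) and k₁(n)/log n → 1/log(1/q) as n → ∞. -/

import Mathlib

open Filter

namespace ThreshAux

noncomputable def T (d : ℕ → ℝ) (k : ℕ) : ℝ := ∑' j : ℕ, d (k + 1 + j)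

set_option maxHeartbeats 1000000 in
lemma aux_summable {q : ℝ} {d : ℕ → ℝ} (hq0 : 0 < q) (hq1 : q < 1)
    (hd : ∀ k, 1 ≤ k → 0 < d k)
    (hlim : Tendsto (fun k : ℕ => Real.log (d k) / (k : ℝ)) atTop (nhds (Real.log q))) :
    Summable (fun k : ℕ => d (k + 1)) := by
  obtain ⟨r, hqr, hr1⟩ : ∃ r : ℝ, q < r ∧ r < 1 := ⟨(1 + q) / 2, by linarith, by linarith⟩
  have hr0 : 0 < r := hq0.trans hqr
  have hev : ∀ᶠ k : ℕ in atTop, Real.log (d k) / k < Real.log r :=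
    hlim.eventually_lt_const (Real.log_lt_log hq0 hqr)
  have hev2 : ∀ᶠ k : ℕ in atTop, d k ≤ r ^ k := by
    filter_upwards [hev, eventually_ge_atTop 1] with k h1 h2
    have hk0 : (0:ℝ) < k := by exact_mod_cast h2
    have : Real.log (d k) < k * Real.log r := by
      rw [div_lt_iff₀ hk0] at h1; linarith [h1]
    have hdk := hd k h2
    calc d k = Real.exp (Real.log (d k)) := (Real.exp_log hdk).symm
      _ ≤ Real.exp ((k : ℝ) * Real.log r) := Real.exp_le_exp.2 this.le
      _ = r ^ k := by rw [Real.exp_nat_mul, Real.exp_log hr0]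
  obtain ⟨K, hK⟩ := eventually_atTop.1 hev2
  rw [← summable_nat_add_iff K]
  refine Summable.of_nonneg_of_le (f := fun k => r ^ (K + 1) * r ^ k)
    (fun k => (hd (k + K + 1) (by omega)).le) (fun k => ?_)
    ((summable_geometric_of_lt_one hr0.le hr1).mul_left _)
  have := hK (k + K + 1) (by omega)
  calc d (k + K + 1) ≤ r ^ (k + K + 1) := this
    _ = r ^ (K + 1) * r ^ k := by rw [← pow_add]; ring_nf

variable {q : ℝ} {d : ℕ → ℝ}

lemma summable_tail (hS : Summable (fun k : ℕ => d (k + 1))) (k : ℕ) :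
    Summable (fun j : ℕ => d (k + 1 + j)) := by
  have h := (summable_nat_add_iff (f := fun k => d (k + 1)) k).2 hS
  have he : (fun j : ℕ => d (k + 1 + j)) = (fun j : ℕ => d (j + k + 1)) := by
    funext j; congr 1; omega
  rw [he]; exact h

lemma T_succ (hS : Summable (fun k : ℕ => d (k + 1))) (k : ℕ) :
    T d k = d (k + 1) + T d (k + 1) := by
  have h := Summable.tsum_eq_zero_add (summable_tail hS k)
  simp only [T]
  rw [show k + 1 + 0 = k + 1 by omega] at h
  rw [h]
  congr 1
  apply tsum_congr
  intro j
  congr 1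
  omega

lemma T_nonneg (hd : ∀ k, 1 ≤ k → 0 < d k) (k : ℕ) : 0 ≤ T d k :=
  tsum_nonneg fun j => (hd _ (by omega)).le

lemma T_pos (hd : ∀ k, 1 ≤ k → 0 < d k) (hS : Summable (fun k : ℕ => d (k + 1))) (k : ℕ) :
    0 < T d k := by
  rw [T_succ hS k]
  have := hd (k + 1) (by omega)
  have := T_nonneg hd (k + 1)
  linarith

lemma T_anti (hd : ∀ k, 1 ≤ k → 0 < d k) (hS : Summable (fun k : ℕ => d (k + 1))) :
    Antitone (T d) := by
  apply antitone_nat_of_succ_le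
  intro k
  rw [T_succ hS k]
  have := hd (k + 1) (by omega)
  linarith

lemma T_tendsto_zero : Tendsto (T d) atTop (nhds 0) := by
  have h := (tendsto_sum_nat_add d).comp (tendsto_add_atTop_nat 1)
  have he : T d = (fun i : ℕ => ∑' j : ℕ, d (j + i)) ∘ (fun k => k + 1) := by
    funext k
    simp only [T, Function.comp_apply]
    exact tsum_congr fun j => by congr 1; omega
  rw [he]; exact h


lemma tail_bounds (hq0 : 0 < q) (hq1 : q < 1) (hd : ∀ k, 1 ≤ k → 0 < d k)
    (hlim : Tendsto (fun k : ℕ => Real.log (d k) / (k : ℝ)) atTop (nhds (Real.log q)))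
    {ε : ℝ} (hε : 0 < ε) (hεc : Real.log q + ε < 0) :
    ∀ᶠ k : ℕ in atTop,
      Real.exp (k * (Real.log q - ε)) ≤ T d k ∧ T d k ≤ Real.exp (k * (Real.log q + ε)) := by
  have hS := aux_summable hq0 hq1 hd hlim
  have h1 : ∀ᶠ k : ℕ in atTop, |Real.log (d k) / k - Real.log q| < ε / 2 := by
    obtain ⟨N, hN⟩ := Metric.tendsto_atTop.1 hlim (ε / 2) (by positivity)
    filter_upwards [eventually_ge_atTop N] with k hk
    simpa [Real.dist_eq] using hN k hk
  have hdb : ∀ᶠ k : ℕ in atTop,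
      Real.exp (k * (Real.log q - ε / 2)) ≤ d k ∧
        d k ≤ Real.exp (k * (Real.log q + ε / 2)) := by
    filter_upwards [h1, eventually_ge_atTop 1] with k h1 hk1
    have hk0 : (0:ℝ) < k := by exact_mod_cast hk1
    rw [abs_lt] at h1
    have e1 : Real.log q - ε / 2 < Real.log (d k) / k := by linarith [h1.1]
    have e2 : Real.log (d k) / k < Real.log q + ε / 2 := by linarith [h1.2]
    have f1 : (Real.log q - ε / 2) * k < Real.log (d k) := (lt_div_iff₀ hk0).1 e1
    have f2 : Real.log (d k) < (Real.log q + ε / 2) * k := (div_lt_iff₀ hk0).1 e2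
    constructor
    · calc Real.exp ((k:ℝ) * (Real.log q - ε / 2))
          ≤ Real.exp (Real.log (d k)) := by
            apply Real.exp_le_exp.2; rw [mul_comm]; exact f1.le
        _ = d k := Real.exp_log (hd k hk1)
    · calc d k = Real.exp (Real.log (d k)) := (Real.exp_log (hd k hk1)).symm
        _ ≤ Real.exp ((k:ℝ) * (Real.log q + ε / 2)) := by
            apply Real.exp_le_exp.2; rw [mul_comm]; exact f2.le
  obtain ⟨K, hK⟩ := eventually_atTop.1 hdb
  have hlow : ∀ᶠ k : ℕ in atTop, Real.exp (k * (Real.log q - ε)) ≤ T d k := by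
    filter_upwards [eventually_ge_atTop K,
      (tendsto_natCast_atTop_atTop (R := ℝ)).eventually_ge_atTop
        ((ε / 2 - Real.log q) / (ε / 2))] with k hk hk2
    have hd1 := (hK (k + 1) (by omega)).1
    push_cast at hd1
    have hTd : d (k + 1) ≤ T d k := by
      rw [T_succ hS k]; linarith [T_nonneg hd (k + 1)]
    have hm : ε / 2 - Real.log q ≤ (k:ℝ) * (ε / 2) :=
      (div_le_iff₀ (by positivity)).1 hk2
    have hmono : (k:ℝ) * (Real.log q - ε) ≤ ((k:ℝ) + 1) * (Real.log q - ε / 2) := by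
      nlinarith
    calc Real.exp ((k:ℝ) * (Real.log q - ε))
        ≤ Real.exp (((k:ℝ) + 1) * (Real.log q - ε / 2)) := Real.exp_le_exp.2 hmono
      _ ≤ d (k + 1) := hd1
      _ ≤ T d k := hTd
  have hupp : ∀ᶠ k : ℕ in atTop, T d k ≤ Real.exp (k * (Real.log q + ε)) := by
    set s : ℝ := Real.log q + ε / 2 with hs
    have hs0 : s < 0 := by rw [hs]; linarith
    have hes1 : Real.exp s < 1 := by
      rw [Real.exp_lt_one_iff]; exact hs0
    have hC0 : 0 < (1 - Real.exp s)⁻¹ := inv_pos.2 (by linarith)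
    have hfun : ∀ k : ℕ, (fun j : ℕ => Real.exp (((k + 1 + j : ℕ) : ℝ) * s)) =
        fun j : ℕ => Real.exp (((k + 1 : ℕ) : ℝ) * s) * Real.exp s ^ j := by
      intro k; funext j
      rw [← Real.exp_nat_mul, ← Real.exp_add]; congr 1; push_cast; ring
    filter_upwards [eventually_ge_atTop K,
      (tendsto_natCast_atTop_atTop (R := ℝ)).eventually_ge_atTop
        ((Real.log (1 - Real.exp s)⁻¹ + s) / (ε / 2))] with k hk hk2
    have hterm : ∀ j : ℕ, d (k + 1 + j) ≤ Real.exp (((k + 1 + j : ℕ) : ℝ) * s) :=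
      fun j => (hK (k + 1 + j) (by omega)).2
    have hgs : Summable (fun j : ℕ => Real.exp (((k + 1 + j : ℕ) : ℝ) * s)) := by
      rw [hfun k]
      exact (summable_geometric_of_lt_one (Real.exp_pos s).le hes1).mul_left _
    have h1 : T d k ≤ ∑' j : ℕ, Real.exp (((k + 1 + j : ℕ) : ℝ) * s) :=
      Summable.tsum_le_tsum hterm (summable_tail hS k) hgs
    have h2 : ∑' j : ℕ, Real.exp (((k + 1 + j : ℕ) : ℝ) * s) =
        Real.exp (((k + 1 : ℕ) : ℝ) * s) * (1 - Real.exp s)⁻¹ := by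
      rw [hfun k, tsum_mul_left, tsum_geometric_of_lt_one (Real.exp_pos s).le hes1]
    have hm : Real.log (1 - Real.exp s)⁻¹ + s ≤ (k:ℝ) * (ε / 2) :=
      (div_le_iff₀ (by positivity)).1 hk2
    have h3 : Real.exp (((k + 1 : ℕ) : ℝ) * s) * (1 - Real.exp s)⁻¹ ≤
        Real.exp ((k:ℝ) * (Real.log q + ε)) := by
      rw [← Real.exp_log hC0, ← Real.exp_add]
      apply Real.exp_le_exp.2
      push_cast
      have expand : (k:ℝ) * (Real.log q + ε) = (k:ℝ) * s + (k:ℝ) * (ε / 2) := by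
        rw [hs]; ring
      have expand2 : ((k:ℝ) + 1) * s = (k:ℝ) * s + s := by ring
      linarith
    linarith
  filter_upwards [hlow, hupp] with k h1 h2 using ⟨h1, h2⟩

end ThreshAux

open ThreshAux

set_option maxHeartbeats 1000000 in
/-- Threshold asymptotics from the proof of Theorem 1:
if `(log d̄_k)/k → log q` with `0 < q < 1` and `d̄_k > 0` for `k ≥ 1`, then
`Σ_{k ≥ 1} d̄_k < ∞`, the thresholds
`k₀(n) = min {k : n · Σ_{ℓ > k} d̄_ℓ ≤ 1}` and
`k₁(n) = max {k : n · Σ_{ℓ > k} d̄_ℓ ≥ log n}` are well defined for all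
sufficiently large `n`, and `k₀(n)/log n → 1/log(1/q)`, `k₁(n)/log n → 1/log(1/q)`. -/
theorem threshold_asymptotics (q : ℝ) (hq0 : 0 < q) (hq1 : q < 1)
    (d : ℕ → ℝ) (hd : ∀ k, 1 ≤ k → 0 < d k)
    (hlim : Tendsto (fun k : ℕ => Real.log (d k) / (k : ℝ)) atTop (nhds (Real.log q))) :
    Summable (fun k : ℕ => d (k + 1)) ∧
    (∀ᶠ n : ℕ in atTop,
      {k : ℕ | (n : ℝ) * ∑' j : ℕ, d (k + 1 + j) ≤ 1}.Nonempty ∧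
      {k : ℕ | Real.log n ≤ (n : ℝ) * ∑' j : ℕ, d (k + 1 + j)}.Nonempty ∧
      BddAbove {k : ℕ | Real.log n ≤ (n : ℝ) * ∑' j : ℕ, d (k + 1 + j)}) ∧
    Tendsto (fun n : ℕ =>
        ((sInf {k : ℕ | (n : ℝ) * ∑' j : ℕ, d (k + 1 + j) ≤ 1} : ℕ) : ℝ) / Real.log n)
      atTop (nhds (1 / Real.log (1 / q))) ∧
    Tendsto (fun n : ℕ =>
        ((sSup {k : ℕ | Real.log n ≤ (n : ℝ) * ∑' j : ℕ, d (k + 1 + j)} : ℕ) : ℝ) /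
          Real.log n)
      atTop (nhds (1 / Real.log (1 / q))) := by
  have hS := aux_summable hq0 hq1 hd hlim
  have hlogq : Real.log q < 0 := Real.log_neg hq0 hq1
  set c : ℝ := -Real.log q with hc
  have hc0 : 0 < c := by rw [hc]; linarith
  have hlog1q : Real.log (1 / q) = c := by rw [one_div, Real.log_inv]
  have hTpos := T_pos hd hS
  have hTanti := T_anti hd hS
  have hT0 : Tendsto (T d) atTop (nhds 0) := T_tendsto_zero
  have hsetA : ∀ n : ℕ, {k : ℕ | (n : ℝ) * ∑' j : ℕ, d (k + 1 + j) ≤ 1} =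
      {k : ℕ | (n : ℝ) * T d k ≤ 1} := fun _ => rfl
  have hsetB : ∀ n : ℕ, {k : ℕ | Real.log n ≤ (n : ℝ) * ∑' j : ℕ, d (k + 1 + j)} =
      {k : ℕ | Real.log n ≤ (n : ℝ) * T d k} := fun _ => rfl
  simp only [hsetA, hsetB, hlog1q]
  have hlogn : Tendsto (fun n : ℕ => Real.log n) atTop atTop :=
    Real.tendsto_log_atTop.comp tendsto_natCast_atTop_atTop
  -- nonemptiness of A n for every n
  have hAne : ∀ n : ℕ, {k : ℕ | (n : ℝ) * T d k ≤ 1}.Nonempty := by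
    intro n
    have h := (hT0.const_mul (n : ℝ)).eventually_lt_const
      (show (n : ℝ) * 0 < 1 by norm_num)
    obtain ⟨k, hk⟩ := h.exists
    exact ⟨k, hk.le⟩
  -- eventual nonemptiness of B n
  have hBne : ∀ᶠ n : ℕ in atTop, Real.log n ≤ (n : ℝ) * T d 0 := by
    have h := Real.isLittleO_log_id_atTop.def (hTpos 0)
    filter_upwards [(tendsto_natCast_atTop_atTop (R := ℝ)).eventually h,
      eventually_ge_atTop 1] with n hn hn1
    simp only [Real.norm_eq_abs, id] at hn
    have h1 : (0:ℝ) ≤ (n:ℝ) := by positivity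
    calc Real.log n ≤ |Real.log n| := le_abs_self _
      _ ≤ T d 0 * |(n:ℝ)| := hn
      _ = (n : ℝ) * T d 0 := by rw [abs_of_nonneg h1]; ring
  -- eventual boundedness of B n
  have hBbdd : ∀ᶠ n : ℕ in atTop, BddAbove {k : ℕ | Real.log n ≤ (n : ℝ) * T d k} := by
    filter_upwards [eventually_ge_atTop 2] with n hn2
    have hlogpos : 0 < Real.log n := Real.log_pos (by exact_mod_cast hn2)
    have h := (hT0.const_mul (n : ℝ)).eventually_lt_const
      (show (n : ℝ) * 0 < Real.log n by simpa using hlogpos)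
    obtain ⟨K, hK⟩ := eventually_atTop.1 h
    refine ⟨K, fun k hk => ?_⟩
    by_contra h'
    push_neg at h'
    exact absurd hk (not_le.2 (hK k h'.le))
  refine ⟨hS, ?_, ?_, ?_⟩
  · filter_upwards [hBne, hBbdd] with n h1 h2
    exact ⟨hAne n, ⟨0, h1⟩, h2⟩
  -- ==================== sInf part ====================
  · rw [Metric.tendsto_nhds]
    intro ε' hε'
    set ε : ℝ := min (c / 2) (ε' * c ^ 2 / 4) with hεdef
    have hε0 : 0 < ε := lt_min (by positivity) (by positivity)
    have hεc2 : ε ≤ c / 2 := min_le_left _ _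
    have hεc4 : ε ≤ ε' * c ^ 2 / 4 := min_le_right _ _
    have hcε : 0 < c - ε := by linarith
    have hεc : Real.log q + ε < 0 := by linarith
    obtain ⟨K, hKb⟩ := eventually_atTop.1 (tail_bounds hq0 hq1 hd hlim hε0 hεc)
    have hkey1 : 1 / (c - ε) ≤ 1 / c + ε' / 2 := by
      rw [div_add' _ _ _ hc0.ne', div_le_div_iff₀ hcε hc0]
      nlinarith
    have hkey2 : 1 / c - 1 / (c + ε) ≤ ε' / 2 := by
      have h1 : 1 / c - 1 / (c + ε) = ε / (c * (c + ε)) := by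
        field_simp
        ring
      rw [h1, div_le_iff₀ (by positivity)]
      nlinarith
    filter_upwards [eventually_ge_atTop 2,
      hlogn.eventually_ge_atTop (c * (K + 1)),
      hlogn.eventually_ge_atTop (4 / ε'),
      (tendsto_natCast_atTop_atTop (R := ℝ)).eventually_ge_atTop (1 / T d K + 1)]
      with n hn2 hl1 hl2 hl3
    have hn0 : (0:ℝ) < n := by positivity
    have hlogpos : 0 < Real.log n := Real.log_pos (by exact_mod_cast hn2)
    set S := {k : ℕ | (n : ℝ) * T d k ≤ 1} with hSdef
    set k0 : ℕ := sInf S with hk0def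
    -- upper bound
    set m : ℕ := ⌈Real.log n / (c - ε)⌉₊ with hmdef
    have hm1 : Real.log n / (c - ε) ≤ (m : ℝ) := Nat.le_ceil _
    have hm2 : (m : ℝ) < Real.log n / (c - ε) + 1 := Nat.ceil_lt_add_one (by positivity)
    have hmK : K ≤ m := by
      have h1 : ((K : ℝ) + 1) ≤ Real.log n / c := by
        rw [le_div_iff₀ hc0]; linarith
      have h2 : Real.log n / c ≤ Real.log n / (c - ε) :=
        div_le_div_of_nonneg_left hlogpos.le hcε (by linarith)
      have : (K : ℝ) ≤ (m : ℝ) := by linarith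
      exact_mod_cast this
    have hmS : m ∈ S := by
      have hb := (hKb m hmK).2
      have h1 : (m : ℝ) * (Real.log q + ε) ≤ -Real.log n := by
        have h2 : Real.log n ≤ (m : ℝ) * (c - ε) := (div_le_iff₀ hcε).1 hm1
        have h3 : (m : ℝ) * (Real.log q + ε) = -((m : ℝ) * (c - ε)) := by
          rw [hc]; ring
        linarith
      have h4 : T d m ≤ ((n : ℝ))⁻¹ := by
        calc T d m ≤ Real.exp ((m : ℝ) * (Real.log q + ε)) := hb
          _ ≤ Real.exp (-Real.log n) := Real.exp_le_exp.2 h1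
          _ = ((n : ℝ))⁻¹ := by rw [Real.exp_neg, Real.exp_log hn0]
      show (n : ℝ) * T d m ≤ 1
      calc (n : ℝ) * T d m ≤ (n : ℝ) * ((n : ℝ))⁻¹ :=
            mul_le_mul_of_nonneg_left h4 hn0.le
        _ = 1 := mul_inv_cancel₀ hn0.ne'
    have hup : (k0 : ℝ) ≤ 1 / (c - ε) * Real.log n + 1 := by
      have h1 : k0 ≤ m := Nat.sInf_le hmS
      have h2 : (k0 : ℝ) ≤ (m : ℝ) := by exact_mod_cast h1
      have h3 : Real.log n / (c - ε) = 1 / (c - ε) * Real.log n := by ring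
      linarith
    -- lower bound
    have hk0S : k0 ∈ S := Nat.sInf_mem (hAne n)
    have hk0T : (n : ℝ) * T d k0 ≤ 1 := hk0S
    have hk0K : K ≤ k0 := by
      by_contra h'
      push_neg at h'
      have h1 : T d K ≤ T d k0 := hTanti h'.le
      have h2 : (n : ℝ) * T d K ≤ 1 := by
        calc (n : ℝ) * T d K ≤ (n : ℝ) * T d k0 :=
              mul_le_mul_of_nonneg_left h1 hn0.le
          _ ≤ 1 := hk0T
      have ht := hTpos K
      have h3 : (1 / T d K) * T d K = 1 := one_div_mul_cancel ht.ne'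
      nlinarith
    have hlow : Real.log n / (c + ε) ≤ (k0 : ℝ) := by
      have hb := (hKb k0 hk0K).1
      have h1 : T d k0 ≤ ((n : ℝ))⁻¹ := by
        rw [← mul_le_mul_iff_right₀ hn0, mul_inv_cancel₀ hn0.ne']
        exact hk0T
      have h2 : Real.exp ((k0 : ℝ) * (Real.log q - ε)) ≤ Real.exp (-Real.log n) := by
        rw [Real.exp_neg, Real.exp_log hn0]
        exact hb.trans h1
      have h3 : (k0 : ℝ) * (Real.log q - ε) ≤ -Real.log n := Real.exp_le_exp.1 h2
      have h4 : (k0 : ℝ) * (Real.log q - ε) = -((k0 : ℝ) * (c + ε)) := by rw [hc]; ring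
      have h5 : Real.log n ≤ (k0 : ℝ) * (c + ε) := by linarith
      rw [div_le_iff₀ (by positivity)]
      linarith
    -- conclude
    have hupA : (k0 : ℝ) / Real.log n ≤ 1 / (c - ε) + 1 / Real.log n := by
      rw [div_le_iff₀ hlogpos]
      have : (1 / (c - ε) + 1 / Real.log n) * Real.log n =
          1 / (c - ε) * Real.log n + 1 := by
        field_simp
      linarith
    have hlowA : 1 / (c + ε) ≤ (k0 : ℝ) / Real.log n := by
      rw [le_div_iff₀ hlogpos]
      have : 1 / (c + ε) * Real.log n = Real.log n / (c + ε) := by ring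
      linarith
    have hinvlog : 1 / Real.log n ≤ ε' / 4 := by
      have h1 : 0 < 4 / ε' := by positivity
      have h2 : 1 / Real.log n ≤ 1 / (4 / ε') :=
        one_div_le_one_div_of_le h1 hl2
      rwa [one_div_div] at h2
    rw [Real.dist_eq, abs_lt]
    constructor
    · linarith
    · linarith
  -- ==================== sSup part ====================
  · rw [Metric.tendsto_nhds]
    intro ε' hε'
    set ε : ℝ := min (c / 2) (ε' * c ^ 2 / 4) with hεdef
    have hε0 : 0 < ε := lt_min (by positivity) (by positivity)
    have hεc2 : ε ≤ c / 2 := min_le_left _ _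
    have hεc4 : ε ≤ ε' * c ^ 2 / 4 := min_le_right _ _
    have hcε : 0 < c - ε := by linarith
    have hcε2 : 0 < c + ε := by linarith
    have hεc : Real.log q + ε < 0 := by linarith
    obtain ⟨K, hKb⟩ := eventually_atTop.1 (tail_bounds hq0 hq1 hd hlim hε0 hεc)
    have hkey1 : 1 / (c - ε) ≤ 1 / c + ε' / 2 := by
      rw [div_add' _ _ _ hc0.ne', div_le_div_iff₀ hcε hc0]
      nlinarith
    have hkey2 : 1 / c - 1 / (c + ε) ≤ ε' / 2 := by
      have h1 : 1 / c - 1 / (c + ε) = ε / (c * (c + ε)) := by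
        field_simp
        ring
      rw [h1, div_le_iff₀ (by positivity)]
      nlinarith
    have hll1 : ∀ᶠ n : ℕ in atTop,
        Real.log (Real.log n) ≤ ε' * c / 8 * Real.log n := by
      have h := Real.isLittleO_log_id_atTop.def
        (show (0:ℝ) < ε' * c / 8 by positivity)
      filter_upwards [hlogn.eventually h, hlogn.eventually_ge_atTop 1] with n hn h1
      simp only [Real.norm_eq_abs, id] at hn
      have h2 : (0:ℝ) ≤ Real.log n := by linarith
      calc Real.log (Real.log n) ≤ |Real.log (Real.log n)| := le_abs_self _
        _ ≤ ε' * c / 8 * |Real.log n| := hn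
        _ = ε' * c / 8 * Real.log n := by rw [abs_of_nonneg h2]
    have hll2 : ∀ᶠ n : ℕ in atTop,
        Real.log (Real.log n) ≤ 1 / 2 * Real.log n := by
      have h := Real.isLittleO_log_id_atTop.def (show (0:ℝ) < 1 / 2 by norm_num)
      filter_upwards [hlogn.eventually h, hlogn.eventually_ge_atTop 1] with n hn h1
      simp only [Real.norm_eq_abs, id] at hn
      have h2 : (0:ℝ) ≤ Real.log n := by linarith
      calc Real.log (Real.log n) ≤ |Real.log (Real.log n)| := le_abs_self _
        _ ≤ 1 / 2 * |Real.log n| := hn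
        _ = 1 / 2 * Real.log n := by rw [abs_of_nonneg h2]
    filter_upwards [eventually_ge_atTop 2, hBne, hBbdd, hll1, hll2,
      hlogn.eventually_ge_atTop (c * (K + 1)),
      hlogn.eventually_ge_atTop (4 / ε'),
      hlogn.eventually_ge_atTop (2 * (c + ε) * (K + 1)),
      hlogn.eventually_ge_atTop 1]
      with n hn2 hBne' hBbdd' hll1' hll2' hl1 hl2 hl3 hl4
    have hn0 : (0:ℝ) < n := by positivity
    have hlogpos : 0 < Real.log n := by linarith
    set B := {k : ℕ | Real.log n ≤ (n : ℝ) * T d k} with hBdef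
    set k1 : ℕ := sSup B with hk1def
    have hk1B : k1 ∈ B := Nat.sSup_mem ⟨0, hBne'⟩ hBbdd'
    have hk1T : Real.log n ≤ (n : ℝ) * T d k1 := hk1B
    -- upper bound
    have hupA : (k1 : ℝ) / Real.log n ≤ 1 / c + ε' / 2 := by
      rcases lt_or_ge k1 K with hcase | hcase
      · have h1 : (k1 : ℝ) ≤ (K : ℝ) := by exact_mod_cast hcase.le
        have h2 : (K : ℝ) * c ≤ Real.log n := by nlinarith
        rw [div_le_iff₀ hlogpos]
        have h4 : (K : ℝ) ≤ Real.log n / c := (le_div_iff₀ hc0).2 h2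
        have h5 : (0:ℝ) ≤ ε' * Real.log n := by positivity
        have he : (1 / c + ε' / 2) * Real.log n
            = Real.log n / c + ε' / 2 * Real.log n := by ring
        rw [he]
        linarith
      · have hb := (hKb k1 hcase).2
        have hTlow : ((n : ℝ))⁻¹ ≤ T d k1 := by
          have ht1 : Real.log n / n ≤ T d k1 := by
            rw [div_le_iff₀ hn0]
            linarith [hk1T]
          have ht2 : ((n : ℝ))⁻¹ ≤ Real.log n / n := by
            rw [inv_eq_one_div]
            gcongr
          exact ht2.trans ht1
        have h2 : Real.exp (-Real.log n) ≤ Real.exp ((k1 : ℝ) * (Real.log q + ε)) := by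
          rw [Real.exp_neg, Real.exp_log hn0]
          exact hTlow.trans hb
        have h3 : -Real.log n ≤ (k1 : ℝ) * (Real.log q + ε) := Real.exp_le_exp.1 h2
        have h4 : (k1 : ℝ) * (Real.log q + ε) = -((k1 : ℝ) * (c - ε)) := by
          rw [hc]; ring
        have h5 : (k1 : ℝ) * (c - ε) ≤ Real.log n := by linarith
        have h6 : (k1 : ℝ) ≤ 1 / (c - ε) * Real.log n := by
          have := (le_div_iff₀ hcε).2 h5
          have he : Real.log n / (c - ε) = 1 / (c - ε) * Real.log n := by ring
          linarith [(le_div_iff₀ hcε).2 h5]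
        rw [div_le_iff₀ hlogpos]
        nlinarith [hkey1, hlogpos.le]
    -- lower bound
    set L : ℝ := Real.log n with hLdef
    set ll : ℝ := Real.log (Real.log n) with hlldef
    set x : ℝ := L - ll with hxdef
    have hx2 : L / 2 ≤ x := by
      rw [hxdef]; linarith
    have hx0 : 0 ≤ x := by linarith
    set m : ℕ := ⌊x / (c + ε)⌋₊ with hmdef
    have hm1 : (m : ℝ) ≤ x / (c + ε) := Nat.floor_le (by positivity)
    have hm2 : x / (c + ε) < (m : ℝ) + 1 := Nat.lt_floor_add_one _
    have hmK : K ≤ m := by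
      have h1 : ((K : ℝ) + 1) * (c + ε) ≤ x := by nlinarith
      have h2 : ((K : ℝ) + 1) ≤ x / (c + ε) := (le_div_iff₀ hcε2).2 h1
      have h3 : (K : ℝ) ≤ (m : ℝ) := by linarith
      exact_mod_cast h3
    have hmB : m ∈ B := by
      have hb := (hKb m hmK).1
      have h1 : (m : ℝ) * (c + ε) ≤ x := (le_div_iff₀ hcε2).1 hm1
      have h2 : ll - L ≤ (m : ℝ) * (Real.log q - ε) := by
        have he : (m : ℝ) * (Real.log q - ε) = -((m : ℝ) * (c + ε)) := by
          rw [hc]; ring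
        linarith
      have h3 : L / n ≤ T d m := by
        have e1 : Real.exp (ll - L) = L / n := by
          rw [Real.exp_sub, hlldef, hLdef, Real.exp_log hlogpos, Real.exp_log hn0]
        calc L / n = Real.exp (ll - L) := e1.symm
          _ ≤ Real.exp ((m : ℝ) * (Real.log q - ε)) := Real.exp_le_exp.2 h2
          _ ≤ T d m := hb
      show Real.log n ≤ (n : ℝ) * T d m
      have h4 := (div_le_iff₀ hn0).1 h3
      rw [← hLdef]
      linarith
    have hk1m : m ≤ k1 := le_csSup hBbdd' hmB
    have hlowA : 1 / c - 7 * ε' / 8 ≤ (k1 : ℝ) / Real.log n := by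
      have h1 : (m : ℝ) ≤ (k1 : ℝ) := by exact_mod_cast hk1m
      have h2 : x / (c + ε) - 1 ≤ (k1 : ℝ) := by linarith
      rw [le_div_iff₀ hlogpos]
      have hF3 : (4 : ℝ) ≤ ε' * L := by
        have := (div_le_iff₀ (show (0:ℝ) < ε' by positivity)).1 hl2
        nlinarith
      rcases le_or_gt (1 / c - ε' / 2) 0 with hneg | hpos
      · nlinarith
      · have g1 : x * (1 / c - ε' / 2) ≤ x / (c + ε) := by
          have ga : 1 / c - ε' / 2 ≤ 1 / (c + ε) := by linarith
          have gb : x * (1 / c - ε' / 2) ≤ x * (1 / (c + ε)) :=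
            mul_le_mul_of_nonneg_left ga hx0
          have gc : x * (1 / (c + ε)) = x / (c + ε) := by ring
          linarith
        have g2 : (L - ε' * c / 8 * L) * (1 / c - ε' / 2) ≤ x * (1 / c - ε' / 2) := by
          apply mul_le_mul_of_nonneg_right _ hpos.le
          rw [hxdef]
          linarith [hll1']
        have g3 : (1 / c) * c = 1 := one_div_mul_cancel hc0.ne'
        have g4 : L * (1 / c) - 5 * ε' / 8 * L ≤ (L - ε' * c / 8 * L) * (1 / c - ε' / 2) := by
          have e : (L - ε' * c / 8 * L) * (1 / c - ε' / 2)
              = L * (1 / c) - ε' / 2 * L - ε' / 8 * (1 / c * c) * L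
                + ε' ^ 2 * c / 16 * L := by ring
          rw [e, g3]
          have hnn : (0:ℝ) ≤ ε' ^ 2 * c / 16 * L := by positivity
          linarith
        have e2 : (1 / c - 7 * ε' / 8) * L = L * (1 / c) - 7 * ε' / 8 * L := by ring
        rw [e2]
        linarith
    rw [Real.dist_eq, abs_lt]
    constructor
    · linarith
    · linarith
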